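/- arXiv:2201.03452 — 2 statements merged into one kernel-verified Lean document; each statement's English description precedes it below -/
import Mathlib

section
/- Let k ≥ 1 be a natural number and suppose the kernel of the Lights Out map Φ of the (6k − 1) × (6k − 1) grid graph has GF(2)-dimension exactly 2. Then the answer to the Most Clicks Problem on this grid equals 26k² − 12k + 1: every solvable configuration has a solution of Hamming weight at most 26k² − 12k + 1, and there exists a solvable configuration whose minimum-weight solution has Hamming weight exactly 26k² − 12k + 1. -/
/-- The Lights Out map of a finite simple graph `G`:
`Φ_G(x)(v) = x(v) + Σ_{u ~ v} x(u)` over GF(2), as a GF(2)-linear map. -/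
def lightsOut {V : Type*} [Fintype V] (G : SimpleGraph V) [DecidableRel G.Adj] :
    (V → ZMod 2) →ₗ[ZMod 2] (V → ZMod 2) where
  toFun x := fun v => x v + ∑ u ∈ G.neighborFinset v, x u
  map_add' x y := by
    funext v
    simp [Finset.sum_add_distrib]
    ring
  map_smul' c x := by
    funext v
    simp [Finset.mul_sum, mul_add]

/-- The Hamming weight of a GF(2) vector: the number of coordinates equal to 1. -/
def hammingWeight {V : Type*} [Fintype V] (x : V → ZMod 2) : ℕ :=
  (Finset.univ.filter fun v => x v = 1).card

/-- The `n × n` grid graph on `Fin n × Fin n`: two vertices are adjacent when they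
agree in one coordinate and differ by exactly 1 in the other. -/
def gridGraph (n : ℕ) : SimpleGraph (Fin n × Fin n) where
  Adj a b := (a.1 = b.1 ∧ (a.2.val + 1 = b.2.val ∨ b.2.val + 1 = a.2.val)) ∨
             (a.2 = b.2 ∧ (a.1.val + 1 = b.1.val ∨ b.1.val + 1 = a.1.val))
  symm := by
    constructor
    rintro a b (⟨h1, h2⟩ | ⟨h1, h2⟩)
    · exact Or.inl ⟨h1.symm, h2.symm⟩
    · exact Or.inr ⟨h1.symm, h2.symm⟩
  loopless := by
    constructor
    rintro a (⟨_, h | h⟩ | ⟨_, h | h⟩) <;> omega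

instance (n : ℕ) : DecidableRel (gridGraph n).Adj := fun a b => by
  unfold gridGraph
  exact inferInstanceAs (Decidable (_ ∨ _))

/-- `d n`: the GF(2)-dimension of the kernel of the Lights Out map of the `n × n` grid. -/
noncomputable def gridNullity (n : ℕ) : ℕ :=
  Module.finrank (ZMod 2) (LinearMap.ker (lightsOut (gridGraph n)))


/-! ### Auxiliary machinery -/
set_option maxHeartbeats 2000000

section Aux

open Finset

-- Explicit evaluation of the Lights Out map on the grid graph.

lemma sum_ite_fin_eq {n : ℕ} (t : ℕ) (f : Fin n → ZMod 2) :
    (∑ q : Fin n, if q.val = t then f q else 0) =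
      if h : t < n then f ⟨t, h⟩ else 0 := by
  split_ifs with h
  · rw [Finset.sum_eq_single (⟨t, h⟩ : Fin n)]
    · simp
    · intro q _ hq
      rw [if_neg fun hv => hq (Fin.ext hv)]
    · simp
  · apply Finset.sum_eq_zero; intro q _
    rw [if_neg]; have := q.2; omega

lemma ite_or4 {P1 P2 P3 P4 : Prop} [Decidable P1] [Decidable P2] [Decidable P3] [Decidable P4]
    (h12 : ¬(P1 ∧ P2)) (h13 : ¬(P1 ∧ P3)) (h14 : ¬(P1 ∧ P4)) (h23 : ¬(P2 ∧ P3))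
    (h24 : ¬(P2 ∧ P4)) (h34 : ¬(P3 ∧ P4)) (a : ZMod 2) :
    (if P1 ∨ P2 ∨ P3 ∨ P4 then a else 0) =
      (if P1 then a else 0) + (if P2 then a else 0) + (if P3 then a else 0) +
      (if P4 then a else 0) := by
  by_cases h1 : P1
  · rw [if_pos (Or.inl h1), if_pos h1, if_neg (fun h => h12 ⟨h1, h⟩),
      if_neg (fun h => h13 ⟨h1, h⟩), if_neg (fun h => h14 ⟨h1, h⟩), add_zero, add_zero, add_zero]
  · rw [if_neg h1]
    by_cases h2 : P2
    · rw [if_pos (Or.inr (Or.inl h2)), if_pos h2, if_neg (fun h => h23 ⟨h2, h⟩),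
        if_neg (fun h => h24 ⟨h2, h⟩), zero_add, add_zero, add_zero]
    · rw [if_neg h2]
      by_cases h3 : P3
      · rw [if_pos (Or.inr (Or.inr (Or.inl h3))), if_pos h3,
          if_neg (fun h => h34 ⟨h3, h⟩), zero_add, zero_add, add_zero]
      · rw [if_neg h3]
        by_cases h4 : P4
        · rw [if_pos (Or.inr (Or.inr (Or.inr h4))), if_pos h4, zero_add, zero_add, zero_add]
        · rw [if_neg h4, if_neg (by tauto), zero_add, zero_add, zero_add]

lemma phi_eval {n : ℕ} (x : Fin n × Fin n → ZMod 2) (i j : Fin n) :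
    lightsOut (gridGraph n) x (i, j) =
      x (i, j)
      + (if h : j.val + 1 < n then x (i, ⟨j.val + 1, h⟩) else 0)
      + (if _ : 1 ≤ j.val then x (i, ⟨j.val - 1, by have := j.2; omega⟩) else 0)
      + (if h : i.val + 1 < n then x (⟨i.val + 1, h⟩, j) else 0)
      + (if _ : 1 ≤ i.val then x (⟨i.val - 1, by have := i.2; omega⟩, j) else 0) := by
  show x (i, j) + ∑ u ∈ (gridGraph n).neighborFinset (i, j), x u = _
  have hN : (gridGraph n).neighborFinset (i, j) = univ.filter ((gridGraph n).Adj (i, j)) := by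
    ext u; simp [SimpleGraph.mem_neighborFinset]
  rw [hN, Finset.sum_filter, Fintype.sum_prod_type]
  have key : ∀ p q : Fin n,
      (if (gridGraph n).Adj (i, j) (p, q) then x (p, q) else 0) =
      (if p = i ∧ q.val = j.val + 1 then x (p, q) else 0)
      + (if p = i ∧ (1 ≤ j.val ∧ q.val = j.val - 1) then x (p, q) else 0)
      + (if q = j ∧ p.val = i.val + 1 then x (p, q) else 0)
      + (if q = j ∧ (1 ≤ i.val ∧ p.val = i.val - 1) then x (p, q) else 0) := by
    intro p q
    have hadj : (gridGraph n).Adj (i, j) (p, q) ↔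
        ((p = i ∧ q.val = j.val + 1) ∨ (p = i ∧ (1 ≤ j.val ∧ q.val = j.val - 1)) ∨
         (q = j ∧ p.val = i.val + 1) ∨ (q = j ∧ (1 ≤ i.val ∧ p.val = i.val - 1))) := by
      have hadj0 : (gridGraph n).Adj (i, j) (p, q) ↔
          ((i = p ∧ (j.val + 1 = q.val ∨ q.val + 1 = j.val)) ∨
           (j = q ∧ (i.val + 1 = p.val ∨ p.val + 1 = i.val))) := Iff.rfl
      rw [hadj0]
      simp only [Fin.ext_iff]
      omega
    rw [if_congr hadj rfl rfl, ite_or4] <;>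
      · simp only [Fin.ext_iff]; omega
  have T1 : (∑ p : Fin n, ∑ q : Fin n, if p = i ∧ q.val = j.val + 1 then x (p, q) else 0)
      = (if h : j.val + 1 < n then x (i, ⟨j.val + 1, h⟩) else 0) := by
    rw [Finset.sum_comm]
    simp only [ite_and, Finset.sum_ite_eq', Finset.mem_univ, if_true]
    rw [sum_ite_fin_eq (j.val + 1) (fun q => x (i, q))]
  have T2 : (∑ p : Fin n, ∑ q : Fin n,
        if p = i ∧ (1 ≤ j.val ∧ q.val = j.val - 1) then x (p, q) else 0)
      = (if _ : 1 ≤ j.val then x (i, ⟨j.val - 1, by have := j.2; omega⟩) else 0) := by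
    rw [Finset.sum_comm]
    simp only [ite_and, Finset.sum_ite_eq', Finset.mem_univ, if_true]
    by_cases hj : 1 ≤ j.val
    · simp only [hj, if_true, dif_pos hj]
      rw [sum_ite_fin_eq (j.val - 1) (fun q => x (i, q)), dif_pos (by have := j.2; omega)]
      simp
    · simp [hj]
  have T3 : (∑ p : Fin n, ∑ q : Fin n, if q = j ∧ p.val = i.val + 1 then x (p, q) else 0)
      = (if h : i.val + 1 < n then x (⟨i.val + 1, h⟩, j) else 0) := by
    simp only [ite_and, Finset.sum_ite_eq', Finset.mem_univ, if_true]
    rw [show (∑ p : Fin n, if (p : Fin n).val = i.val + 1 then x (p, j) else 0)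
        = _ from sum_ite_fin_eq (i.val + 1) (fun p => x (p, j))]
  have T4 : (∑ p : Fin n, ∑ q : Fin n,
        if q = j ∧ (1 ≤ i.val ∧ p.val = i.val - 1) then x (p, q) else 0)
      = (if _ : 1 ≤ i.val then x (⟨i.val - 1, by have := i.2; omega⟩, j) else 0) := by
    simp only [ite_and, Finset.sum_ite_eq', Finset.mem_univ, if_true]
    by_cases hi : 1 ≤ i.val
    · simp only [hi, if_true, dif_pos hi, true_and]
      rw [show (∑ p : Fin n, if (p : Fin n).val = i.val - 1 then x (p, j) else 0)
          = _ from sum_ite_fin_eq (i.val - 1) (fun p => x (p, j)),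
        dif_pos (by have := i.2; omega)]
      simp
    · simp [hi]
  simp only [key, Finset.sum_add_distrib]
  rw [T1, T2, T3, T4]
  ring

-- Residue-class patterns.

@[reducible] def PA (r s : ℕ) : Prop := (r ≠ 2 ∧ r ≠ 5) ∧ s % 2 = 0
@[reducible] def PB (r s : ℕ) : Prop := (s ≠ 2 ∧ s ≠ 5) ∧ r % 2 = 0
@[reducible] def PZ (r s : ℕ) : Prop := ¬ PA r s ∧ ¬ PB r s
@[reducible] def PX (r s : ℕ) : Prop := PZ r s ∨ ((r = 1 ∨ r = 3) ∧ (s = 0 ∨ s = 2)) ∨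
    ((s = 1 ∨ s = 3) ∧ (r = 0 ∨ r = 2)) ∨ (r = 0 ∧ (s = 0 ∨ s = 4))
@[reducible] def PXor (g h : ℕ → ℕ → Prop) (r s : ℕ) : Prop := (g r s ∧ ¬ h r s) ∨ (¬ g r s ∧ h r s)

instance : ∀ r s, Decidable (PA r s) := fun _ _ => by unfold PA; infer_instance
instance : ∀ r s, Decidable (PB r s) := fun _ _ => by unfold PB; infer_instance
instance : ∀ r s, Decidable (PZ r s) := fun _ _ => by unfold PZ; infer_instance
instance : ∀ r s, Decidable (PX r s) := fun _ _ => by unfold PX; infer_instance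
instance (g h : ℕ → ℕ → Prop) [∀ r s, Decidable (g r s)] [∀ r s, Decidable (h r s)] :
    ∀ r s, Decidable (PXor g h r s) := fun _ _ => by unfold PXor; infer_instance

def patFun (n : ℕ) (g : ℕ → ℕ → Prop) [∀ r s, Decidable (g r s)] :
    Fin n × Fin n → ZMod 2 :=
  fun v => if g (v.1.val % 6) (v.2.val % 6) then 1 else 0

lemma patFun_add (n : ℕ) (g h : ℕ → ℕ → Prop) [∀ r s, Decidable (g r s)]
    [∀ r s, Decidable (h r s)] :
    patFun n g + patFun n h = patFun n (PXor g h) := by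
  funext v
  simp only [Pi.add_apply, patFun, PXor]
  split_ifs <;> first | rfl | decide | tauto

lemma patFun_eq_zero {n : ℕ} (g : ℕ → ℕ → Prop) [∀ r s, Decidable (g r s)]
    (v : Fin n × Fin n) :
    patFun n g v = 0 ↔ ¬ g (v.1.val % 6) (v.2.val % 6) := by
  by_cases h : g (v.1.val % 6) (v.2.val % 6) <;> simp [patFun, h]

-- The two quiet patterns.

lemma pat_ker_a (k : ℕ) (hk : 1 ≤ k) :
    lightsOut (gridGraph (6 * k - 1)) (patFun (6 * k - 1) PA) = 0 := by
  funext v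
  obtain ⟨i, j⟩ := v
  rw [phi_eval]
  have hi := i.2
  have hj := j.2
  simp only [patFun, PA, Pi.zero_apply]
  split_ifs <;> first | rfl | decide | (exfalso; omega)

lemma pat_ker_b (k : ℕ) (hk : 1 ≤ k) :
    lightsOut (gridGraph (6 * k - 1)) (patFun (6 * k - 1) PB) = 0 := by
  funext v
  obtain ⟨i, j⟩ := v
  rw [phi_eval]
  have hi := i.2
  have hj := j.2
  simp only [patFun, PB, Pi.zero_apply]
  split_ifs <;> first | rfl | decide | (exfalso; omega)

-- Counting.

def cnt (n r : ℕ) : ℕ := ((Finset.range n).filter (fun m => m % 6 = r)).card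

lemma count6 (k r : ℕ) (hr : r < 6) :
    ((Finset.range (6 * k)).filter (fun m => m % 6 = r)).card = k := by
  induction k with
  | zero => simp
  | succ k ih =>
    have hsplit : Finset.range (6 * (k + 1)) =
        Finset.range (6 * k) ∪ Finset.Ico (6 * k) (6 * k + 6) := by
      ext m
      simp only [Finset.mem_range, Finset.mem_union, Finset.mem_Ico]
      omega
    have hdisj : Disjoint ((Finset.range (6 * k)).filter (fun m => m % 6 = r))
        ((Finset.Ico (6 * k) (6 * k + 6)).filter (fun m => m % 6 = r)) := by
      simp only [Finset.disjoint_left, Finset.mem_filter, Finset.mem_range, Finset.mem_Ico]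
      omega
    have hIco : (Finset.Ico (6 * k) (6 * k + 6)).filter (fun m => m % 6 = r)
        = {6 * k + r} := by
      ext m
      simp only [Finset.mem_filter, Finset.mem_Ico, Finset.mem_singleton]
      omega
    rw [hsplit, Finset.filter_union, Finset.card_union_of_disjoint hdisj, hIco, ih]
    simp

lemma cnt_eval (k r : ℕ) (hk : 1 ≤ k) (hr : r < 6) :
    cnt (6 * k - 1) r = if r = 5 then k - 1 else k := by
  have h1 : 6 * k = (6 * k - 1) + 1 := by omega
  have h2 : ((Finset.range (6 * k)).filter (fun m => m % 6 = r)).card = k := count6 k r hr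
  rw [h1, Finset.range_add_one, Finset.filter_insert] at h2
  have h3 : ¬ (6 * k - 1) ∈ Finset.range (6 * k - 1) := by simp
  by_cases h5 : r = 5
  · rw [if_pos h5]
    rw [if_pos (by omega)] at h2
    rw [Finset.card_insert_of_notMem (fun hc => h3 (Finset.mem_filter.1 hc).1)] at h2
    unfold cnt; omega
  · rw [if_neg h5]
    rw [if_neg (by omega)] at h2
    exact h2

lemma sum_res1 {M : Type*} [AddCommMonoid M] (n : ℕ) (g : ℕ → M) :
    ∑ i : Fin n, g (i.val % 6) = ∑ r ∈ Finset.range 6, cnt n r • g r := by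
  rw [← Finset.sum_range (fun m => g (m % 6))]
  rw [← Finset.sum_fiberwise_of_maps_to (g := fun m => m % 6) (t := Finset.range 6)
      (fun x _ => Finset.mem_range.2 (Nat.mod_lt x (by norm_num))) (fun m => g (m % 6))]
  refine Finset.sum_congr rfl fun r _ => ?_
  rw [Finset.sum_congr rfl (fun m hm => by
    rw [(Finset.mem_filter.1 hm).2])]
  rw [Finset.sum_const]
  rfl

lemma sum_res2 (n : ℕ) (f : ℕ → ℕ → ℕ) :
    ∑ v : Fin n × Fin n, f (v.1.val % 6) (v.2.val % 6)
      = ∑ r ∈ Finset.range 6, ∑ s ∈ Finset.range 6, cnt n r * (cnt n s * f r s) := by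
  rw [Fintype.sum_prod_type]
  rw [show (∑ i : Fin n, ∑ j : Fin n, f (i.val % 6) (j.val % 6))
      = ∑ i : Fin n, (fun r => ∑ s ∈ Finset.range 6, cnt n s * f r s) (i.val % 6) from
    Finset.sum_congr rfl fun i _ => by
      simpa [smul_eq_mul] using sum_res1 n (fun s => f (i.val % 6) s)]
  simpa [smul_eq_mul, Finset.mul_sum] using
    sum_res1 n (fun r => ∑ s ∈ Finset.range 6, cnt n s * f r s)

lemma weight_patFun (n : ℕ) (g : ℕ → ℕ → Prop) [∀ r s, Decidable (g r s)] :
    hammingWeight (patFun n g)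
      = ∑ r ∈ Finset.range 6, ∑ s ∈ Finset.range 6,
          cnt n r * (cnt n s * (if g r s then 1 else 0)) := by
  rw [← sum_res2]
  unfold hammingWeight
  rw [Finset.card_filter]
  refine Finset.sum_congr rfl fun v _ => ?_
  by_cases h : g (v.1.val % 6) (v.2.val % 6)
  · simp [patFun, h]
  · simp only [patFun, if_neg h]
    rw [if_neg (by decide : ¬ (0 : ZMod 2) = 1)]

-- Weight evaluations for `n = 6k - 1`.

lemma cnt_val (m : ℕ) : ∀ r, r < 6 →
    cnt (6 * (m + 1) - 1) r = if r = 5 then m else m + 1 := by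
  intro r hr
  rw [cnt_eval (m + 1) r (by omega) hr]
  simp

lemma eval_PX (k : ℕ) (hk : 1 ≤ k) :
    hammingWeight (patFun (6 * k - 1) PX) = 26 * k ^ 2 - 12 * k + 1 := by
  obtain ⟨m, rfl⟩ : ∃ m, k = m + 1 := ⟨k - 1, by omega⟩
  rw [weight_patFun]
  simp only [Finset.sum_range_succ, Finset.sum_range_zero,
    cnt_val m 0 (by norm_num), cnt_val m 1 (by norm_num), cnt_val m 2 (by norm_num),
    cnt_val m 3 (by norm_num), cnt_val m 4 (by norm_num), cnt_val m 5 (by norm_num)]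
  norm_num [PXor, PX, PZ, PA, PB]
  have hsq : (m + 1) ^ 2 = m ^ 2 + 2 * m + 1 := by ring
  have h1 : 26 * (m + 1) ^ 2 - 12 * (m + 1) + 1 = 26 * m ^ 2 + 40 * m + 15 := by omega
  rw [h1]
  ring

lemma eval_PXA (k : ℕ) (hk : 1 ≤ k) :
    hammingWeight (patFun (6 * k - 1) (PXor PX PA)) = 26 * k ^ 2 - 12 * k + 1 := by
  obtain ⟨m, rfl⟩ : ∃ m, k = m + 1 := ⟨k - 1, by omega⟩
  rw [weight_patFun]
  simp only [Finset.sum_range_succ, Finset.sum_range_zero,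
    cnt_val m 0 (by norm_num), cnt_val m 1 (by norm_num), cnt_val m 2 (by norm_num),
    cnt_val m 3 (by norm_num), cnt_val m 4 (by norm_num), cnt_val m 5 (by norm_num)]
  norm_num [PXor, PX, PZ, PA, PB]
  have hsq : (m + 1) ^ 2 = m ^ 2 + 2 * m + 1 := by ring
  have h1 : 26 * (m + 1) ^ 2 - 12 * (m + 1) + 1 = 26 * m ^ 2 + 40 * m + 15 := by omega
  rw [h1]
  ring

lemma eval_PXB (k : ℕ) (hk : 1 ≤ k) :
    hammingWeight (patFun (6 * k - 1) (PXor PX PB)) = 26 * k ^ 2 - 12 * k + 1 := by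
  obtain ⟨m, rfl⟩ : ∃ m, k = m + 1 := ⟨k - 1, by omega⟩
  rw [weight_patFun]
  simp only [Finset.sum_range_succ, Finset.sum_range_zero,
    cnt_val m 0 (by norm_num), cnt_val m 1 (by norm_num), cnt_val m 2 (by norm_num),
    cnt_val m 3 (by norm_num), cnt_val m 4 (by norm_num), cnt_val m 5 (by norm_num)]
  norm_num [PXor, PX, PZ, PA, PB]
  have hsq : (m + 1) ^ 2 = m ^ 2 + 2 * m + 1 := by ring
  have h1 : 26 * (m + 1) ^ 2 - 12 * (m + 1) + 1 = 26 * m ^ 2 + 40 * m + 15 := by omega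
  rw [h1]
  ring

lemma eval_PXAB (k : ℕ) (hk : 1 ≤ k) :
    hammingWeight (patFun (6 * k - 1) (PXor (PXor PX PA) PB)) = 26 * k ^ 2 - 12 * k + 1 := by
  obtain ⟨m, rfl⟩ : ∃ m, k = m + 1 := ⟨k - 1, by omega⟩
  rw [weight_patFun]
  simp only [Finset.sum_range_succ, Finset.sum_range_zero,
    cnt_val m 0 (by norm_num), cnt_val m 1 (by norm_num), cnt_val m 2 (by norm_num),
    cnt_val m 3 (by norm_num), cnt_val m 4 (by norm_num), cnt_val m 5 (by norm_num)]
  norm_num [PXor, PX, PZ, PA, PB]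
  have hsq : (m + 1) ^ 2 = m ^ 2 + 2 * m + 1 := by ring
  have h1 : 26 * (m + 1) ^ 2 - 12 * (m + 1) + 1 = 26 * m ^ 2 + 40 * m + 15 := by omega
  rw [h1]
  ring

lemma eval_bound (k : ℕ) (hk : 1 ≤ k) :
    (∑ v : Fin (6 * k - 1) × Fin (6 * k - 1),
        (if PZ (v.1.val % 6) (v.2.val % 6) then 4 else 2))
      = 104 * k ^ 2 - 48 * k + 4 := by
  obtain ⟨m, rfl⟩ : ∃ m, k = m + 1 := ⟨k - 1, by omega⟩
  rw [sum_res2 (6 * (m + 1) - 1) (fun r s => if PZ r s then 4 else 2)]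
  simp only [Finset.sum_range_succ, Finset.sum_range_zero,
    cnt_val m 0 (by norm_num), cnt_val m 1 (by norm_num), cnt_val m 2 (by norm_num),
    cnt_val m 3 (by norm_num), cnt_val m 4 (by norm_num), cnt_val m 5 (by norm_num)]
  norm_num [PZ, PA, PB]
  have hsq : (m + 1) ^ 2 = m ^ 2 + 2 * m + 1 := by ring
  have h1 : 104 * (m + 1) ^ 2 - 48 * (m + 1) + 4 = 104 * m ^ 2 + 160 * m + 60 := by omega
  rw [h1]
  ring

-- Kernel enumeration.

lemma ker_eq (k : ℕ) (hk : 1 ≤ k) (hd : gridNullity (6 * k - 1) = 2) :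
    ∀ y, lightsOut (gridGraph (6 * k - 1)) y = 0 →
      y = 0 ∨ y = patFun (6 * k - 1) PA ∨ y = patFun (6 * k - 1) PB ∨
        y = patFun (6 * k - 1) PA + patFun (6 * k - 1) PB := by
  set n := 6 * k - 1 with hn
  set Φ := lightsOut (gridGraph n) with hΦ
  letI : DecidablePred (· ∈ LinearMap.ker Φ) :=
    fun z => decidable_of_iff (Φ z = 0) (LinearMap.mem_ker).symm
  have hd2 : Module.finrank (ZMod 2) (LinearMap.ker Φ) = 2 := hd
  have hcard : Fintype.card (LinearMap.ker Φ) = 4 := by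
    rw [Module.card_eq_pow_finrank (K := ZMod 2) (V := LinearMap.ker Φ), ZMod.card, hd2]
    norm_num
  set A := patFun n PA with hA
  set B := patFun n PB with hB
  have hAk : A ∈ LinearMap.ker Φ := LinearMap.mem_ker.2 (pat_ker_a k hk)
  have hBk : B ∈ LinearMap.ker Φ := LinearMap.mem_ker.2 (pat_ker_b k hk)
  have h5 : 5 ≤ n := by omega
  set v0 : Fin n × Fin n := (⟨0, by omega⟩, ⟨0, by omega⟩) with hv0
  set v1 : Fin n × Fin n := (⟨1, by omega⟩, ⟨0, by omega⟩) with hv1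
  have hA0 : A v0 = 1 := by norm_num [hA, patFun, PA, hv0]
  have hB0 : B v0 = 1 := by norm_num [hB, patFun, PB, hv0]
  have hA1 : A v1 = 1 := by norm_num [hA, patFun, PA, hv1]
  have hB1 : B v1 = 0 := by norm_num [hB, patFun, PB, hv1]
  have dA0 : A ≠ 0 := fun h => by
    have := congrFun h v0; rw [hA0] at this; exact one_ne_zero this
  have dB0 : B ≠ 0 := fun h => by
    have := congrFun h v0; rw [hB0] at this; exact one_ne_zero this
  have dAB : A ≠ B := fun h => by
    have := congrFun h v1; rw [hA1, hB1] at this; exact one_ne_zero this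
  have dS0 : A + B ≠ 0 := fun h => by
    have := congrFun h v1
    rw [Pi.add_apply, hA1, hB1, add_zero] at this; exact one_ne_zero this
  have dSA : A + B ≠ A := fun h => by
    have := congrFun h v0
    rw [Pi.add_apply, hA0, hB0] at this
    exact one_ne_zero ((add_left_cancel (a := (1 : ZMod 2)) (by rw [this, add_zero])).symm)
  have dSB : A + B ≠ B := fun h => by
    have := congrFun h v0
    rw [Pi.add_apply, hA0, hB0] at this
    have h2 : (1 : ZMod 2) + 1 = 0 + 1 := by rw [this, zero_add]
    exact one_ne_zero (add_right_cancel h2)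
  set T : Finset (LinearMap.ker Φ) :=
    {⟨0, Submodule.zero_mem _⟩, ⟨A, hAk⟩, ⟨B, hBk⟩, ⟨A + B, Submodule.add_mem _ hAk hBk⟩}
    with hT
  have hTcard : T.card = 4 := by
    rw [hT]
    rw [Finset.card_insert_of_notMem, Finset.card_insert_of_notMem,
      Finset.card_insert_of_notMem, Finset.card_singleton]
    · simp only [Finset.mem_singleton, Subtype.mk.injEq]
      exact fun h => dSB h.symm
    · simp only [Finset.mem_insert, Finset.mem_singleton, Subtype.mk.injEq]
      push_neg
      exact ⟨dAB, fun h => dSA h.symm⟩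
    · simp only [Finset.mem_insert, Finset.mem_singleton, Subtype.mk.injEq]
      push_neg
      exact ⟨fun h => dA0 h.symm, fun h => dB0 h.symm, fun h => dS0 h.symm⟩
  have hTuniv : T = Finset.univ := Finset.eq_univ_of_card T (hTcard.trans hcard.symm)
  intro y hy
  have hyK : (⟨y, LinearMap.mem_ker.2 hy⟩ : LinearMap.ker Φ) ∈ T := by
    rw [hTuniv]; exact Finset.mem_univ _
  rw [hT] at hyK
  simp only [Finset.mem_insert, Finset.mem_singleton, Subtype.mk.injEq] at hyK
  exact hyK

end Aux

/-- For `k ≥ 1`, if the `(6k − 1) × (6k − 1)` grid has nullity exactly 2, then the answer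
to the Most Clicks Problem is exactly `26k² − 12k + 1`: every solvable configuration has a
solution of weight at most this value, and some solvable configuration requires it. -/
theorem mcp_nullity_two (k : ℕ) (hk : 1 ≤ k)
    (hd : gridNullity (6 * k - 1) = 2) :
    (∀ b ∈ LinearMap.range (lightsOut (gridGraph (6 * k - 1))),
      ∃ x, lightsOut (gridGraph (6 * k - 1)) x = b ∧
        hammingWeight x ≤ 26 * k ^ 2 - 12 * k + 1) ∧
    (∃ b ∈ LinearMap.range (lightsOut (gridGraph (6 * k - 1))),
      ∀ x, lightsOut (gridGraph (6 * k - 1)) x = b →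
        26 * k ^ 2 - 12 * k + 1 ≤ hammingWeight x) := by
  have hself : ∀ y : Fin (6 * k - 1) × Fin (6 * k - 1) → ZMod 2, y + y = 0 := by
    intro y; funext v; exact CharTwo.add_self_eq_zero _
  have hWsum : ∀ y : Fin (6 * k - 1) × Fin (6 * k - 1) → ZMod 2,
      hammingWeight y = ∑ v, (if y v = 1 then 1 else 0) :=
    fun y => Finset.card_filter _ _
  constructor
  · intro b hb
    obtain ⟨x, hx⟩ := LinearMap.mem_range.1 hb
    have hsum : hammingWeight x + hammingWeight (x + patFun (6 * k - 1) PA)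
        + hammingWeight (x + patFun (6 * k - 1) PB)
        + hammingWeight (x + patFun (6 * k - 1) PA + patFun (6 * k - 1) PB)
        ≤ 104 * k ^ 2 - 48 * k + 4 := by
      simp only [hWsum]
      rw [← Finset.sum_add_distrib, ← Finset.sum_add_distrib, ← Finset.sum_add_distrib]
      refine le_trans (Finset.sum_le_sum ?_) (le_of_eq (eval_bound k hk))
      intro v _
      have hgen : ∀ p q r : ZMod 2,
          ((if p = 1 then 1 else 0) + (if p + q = 1 then 1 else 0) +
           (if p + r = 1 then 1 else 0) + (if p + q + r = 1 then 1 else 0) : ℕ) ≤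
          (if q = 0 ∧ r = 0 then 4 else 2) := by decide
      have h1 := hgen (x v) (patFun (6 * k - 1) PA v) (patFun (6 * k - 1) PB v)
      have h2 : (patFun (6 * k - 1) PA v = 0 ∧ patFun (6 * k - 1) PB v = 0) ↔
          PZ (v.1.val % 6) (v.2.val % 6) := by
        rw [patFun_eq_zero, patFun_eq_zero]
      simp only [Pi.add_apply]
      rwa [if_congr h2 rfl rfl] at h1
    by_contra hcon
    push_neg at hcon
    have h1 := hcon x hx
    have h2 := hcon (x + patFun (6 * k - 1) PA)
      (by rw [map_add, hx, pat_ker_a k hk, add_zero])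
    have h3 := hcon (x + patFun (6 * k - 1) PB)
      (by rw [map_add, hx, pat_ker_b k hk, add_zero])
    have h4 := hcon (x + patFun (6 * k - 1) PA + patFun (6 * k - 1) PB)
      (by rw [map_add, map_add, hx, pat_ker_a k hk, pat_ker_b k hk, add_zero, add_zero])
    have hkk : k ≤ k ^ 2 := Nat.le_self_pow (by norm_num) k
    generalize hK : k ^ 2 = K at h1 h2 h3 h4 hsum hkk
    omega
  · refine ⟨lightsOut (gridGraph (6 * k - 1)) (patFun (6 * k - 1) PX),
      LinearMap.mem_range.2 ⟨patFun (6 * k - 1) PX, rfl⟩, ?_⟩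
    intro x hx
    have hker := ker_eq k hk hd (x + patFun (6 * k - 1) PX)
      (by rw [map_add, hx]; exact hself _)
    have hx2 : x = patFun (6 * k - 1) PX + (x + patFun (6 * k - 1) PX) := by
      rw [add_comm x, ← add_assoc, hself, zero_add]
    rcases hker with h | h | h | h
    · rw [hx2, h, add_zero, eval_PX k hk]
    · rw [hx2, h, patFun_add, eval_PXA k hk]
    · rw [hx2, h, patFun_add, eval_PXB k hk]
    · rw [hx2, h, ← add_assoc, patFun_add, patFun_add, eval_PXAB k hk]
end

section
/- The answer to the Most Clicks Problem on the 5 × 5 grid graph is 15: every solvable configuration on the 5 × 5 grid has a solution of Hamming weight at most 15, and some solvable configuration requires exactly 15 clicks in every minimum-weight solution. -/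
def k1M : Matrix (Fin 5) (Fin 5) (ZMod 2) := !![0, 1, 1, 1, 0; 1, 0, 1, 0, 1; 1, 1, 0, 1, 1; 1, 0, 1, 0, 1; 0, 1, 1, 1, 0]
def k2M : Matrix (Fin 5) (Fin 5) (ZMod 2) := !![1, 0, 1, 0, 1; 1, 0, 1, 0, 1; 0, 0, 0, 0, 0; 1, 0, 1, 0, 1; 1, 0, 1, 0, 1]
def x0M : Matrix (Fin 5) (Fin 5) (ZMod 2) := !![1, 0, 0, 1, 0; 1, 1, 0, 1, 1; 1, 0, 1, 0, 1; 1, 1, 0, 1, 1; 0, 0, 0, 1, 1]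
def certM : Fin 5 → Fin 5 → Matrix (Fin 5) (Fin 5) (ZMod 2) := ![
  ![!![0, 0, 0, 0, 0; 0, 0, 0, 0, 0; 0, 0, 0, 0, 0; 0, 0, 0, 0, 0; 0, 0, 0, 0, 0],
    !![0, 0, 0, 0, 0; 0, 0, 0, 0, 0; 0, 0, 0, 0, 0; 0, 0, 0, 0, 0; 0, 0, 0, 0, 0],
    !![0, 0, 0, 1, 0; 1, 1, 0, 1, 1; 0, 0, 0, 1, 0; 1, 1, 1, 0, 0; 0, 1, 0, 0, 0],
    !![0, 0, 1, 1, 1; 0, 0, 0, 0, 0; 0, 0, 1, 1, 1; 0, 1, 0, 1, 0; 1, 1, 1, 0, 0],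
    !![0, 0, 0, 1, 1; 1, 0, 1, 0, 1; 1, 0, 1, 1, 0; 0, 0, 1, 0, 0; 1, 1, 0, 0, 0]],
  ![!![1, 0, 0, 0, 0; 0, 0, 0, 0, 0; 0, 0, 0, 0, 0; 0, 0, 0, 0, 0; 0, 0, 0, 0, 0],
    !![0, 1, 0, 1, 0; 1, 1, 0, 1, 1; 0, 0, 0, 1, 0; 1, 1, 1, 0, 0; 0, 1, 0, 0, 0],
    !![0, 0, 0, 0, 1; 1, 1, 0, 1, 1; 0, 0, 1, 0, 1; 1, 0, 1, 1, 0; 1, 0, 1, 0, 0],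
    !![0, 0, 1, 0, 0; 0, 1, 1, 1, 0; 1, 0, 0, 1, 1; 1, 0, 0, 1, 0; 0, 1, 1, 0, 0],
    !![0, 0, 1, 0, 1; 1, 0, 1, 0, 1; 1, 0, 0, 0, 1; 0, 1, 1, 1, 0; 0, 0, 1, 0, 0]],
  ![!![1, 1, 0, 1, 0; 0, 1, 0, 1, 1; 0, 0, 0, 1, 0; 1, 1, 1, 0, 0; 0, 1, 0, 0, 0],
    !![1, 1, 0, 1, 1; 0, 1, 0, 0, 0; 0, 0, 1, 1, 1; 0, 1, 0, 1, 0; 1, 1, 1, 0, 0],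
    !![0, 1, 1, 0, 1; 1, 0, 0, 0, 1; 1, 0, 1, 1, 0; 0, 0, 1, 0, 0; 1, 1, 0, 0, 0],
    !![0, 0, 1, 1, 1; 0, 0, 0, 1, 0; 0, 0, 0, 0, 0; 0, 0, 0, 0, 0; 0, 0, 0, 0, 0],
    !![0, 0, 0, 1, 0; 0, 1, 1, 1, 1; 1, 0, 1, 0, 0; 1, 1, 0, 0, 0; 1, 0, 0, 0, 0]],
  ![!![1, 0, 0, 0, 1; 0, 0, 0, 1, 1; 1, 0, 1, 0, 1; 1, 0, 1, 1, 0; 1, 0, 1, 0, 0],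
    !![0, 0, 1, 1, 0; 0, 1, 0, 0, 1; 1, 1, 0, 0, 1; 0, 1, 1, 1, 0; 0, 0, 1, 0, 0],
    !![1, 0, 0, 0, 0; 0, 0, 0, 0, 0; 1, 0, 0, 0, 0; 1, 1, 0, 0, 0; 1, 0, 0, 0, 0],
    !![0, 1, 1, 0, 0; 1, 0, 0, 1, 0; 1, 0, 0, 1, 1; 0, 1, 1, 1, 0; 0, 0, 1, 0, 0],
    !![0, 0, 0, 0, 0; 1, 1, 0, 0, 0; 0, 0, 1, 0, 0; 1, 0, 1, 1, 0; 1, 0, 1, 0, 0]],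
  ![!![0, 1, 1, 0, 1; 0, 0, 0, 0, 1; 0, 1, 1, 1, 0; 1, 0, 1, 0, 0; 1, 1, 0, 0, 0],
    !![1, 1, 1, 0, 0; 0, 0, 0, 1, 0; 1, 1, 0, 1, 1; 0, 0, 0, 1, 0; 1, 1, 1, 0, 0],
    !![1, 0, 1, 1, 1; 0, 1, 0, 1, 0; 0, 1, 1, 0, 0; 1, 1, 0, 0, 0; 0, 1, 0, 0, 0],
    !![1, 1, 0, 1, 1; 0, 1, 0, 0, 0; 0, 0, 1, 1, 1; 0, 0, 0, 1, 0; 0, 0, 0, 0, 0],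
    !![0, 1, 1, 1, 0; 0, 0, 1, 0, 1; 0, 0, 0, 1, 1; 0, 0, 0, 0, 1; 0, 0, 0, 0, 0]]]

def k1f : Fin 5 × Fin 5 → ZMod 2 := fun p => k1M p.1 p.2
def k2f : Fin 5 × Fin 5 → ZMod 2 := fun p => k2M p.1 p.2
def x0f : Fin 5 × Fin 5 → ZMod 2 := fun p => x0M p.1 p.2
def certf : Fin 5 × Fin 5 → Fin 5 × Fin 5 → ZMod 2 := fun v p => certM v.1 v.2 p.1 p.2
def pa : Fin 5 × Fin 5 := (0, 1)
def pb : Fin 5 × Fin 5 := (0, 0)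
def Tf : Fin 5 × Fin 5 → Fin 5 × Fin 5 → ZMod 2 := fun v u =>
  (if u = v then 1 else 0) + (if u = pa then k1f v else 0) + (if u = pb then k2f v else 0)

lemma hw_eq {V : Type*} [Fintype V] (x : V → ZMod 2) :
    hammingWeight x = ∑ v, (if x v = 1 then 1 else 0) :=
  Finset.card_filter _ _

lemma lightsOut_symm {V : Type*} [Fintype V] [DecidableEq V] (G : SimpleGraph V)
    [DecidableRel G.Adj] (c x : V → ZMod 2) :
    ∑ v, lightsOut G c v * x v = ∑ v, c v * lightsOut G x v := by
  simp only [lightsOut, LinearMap.coe_mk, AddHom.coe_mk, add_mul, mul_add,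
    Finset.sum_add_distrib, Finset.sum_mul, Finset.mul_sum]
  congr 1
  have key : ∀ v : V, G.neighborFinset v = Finset.univ.filter (G.Adj v) := by
    intro v; ext u; simp [SimpleGraph.mem_neighborFinset]
  calc ∑ v : V, ∑ u ∈ G.neighborFinset v, c u * x v
      = ∑ v : V, ∑ u : V, if G.Adj v u then c u * x v else 0 := by
        refine Finset.sum_congr rfl fun v _ => ?_
        rw [key v, Finset.sum_filter]
    _ = ∑ u : V, ∑ v : V, if G.Adj v u then c u * x v else 0 := Finset.sum_comm
    _ = ∑ u : V, ∑ v : V, if G.Adj u v then c u * x v else 0 := by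
        refine Finset.sum_congr rfl fun u _ => Finset.sum_congr rfl fun v _ => ?_
        exact if_congr (G.adj_comm v u) rfl rfl
    _ = ∑ u : V, ∑ v ∈ G.neighborFinset u, c u * x v := by
        refine Finset.sum_congr rfl fun u _ => ?_
        rw [key u, Finset.sum_filter]

def nbrM : Fin 5 → Fin 5 → List (Fin 5 × Fin 5) := ![
  ![[(1,0), (0,1)],
    [(1,1), (0,0), (0,2)],
    [(1,2), (0,1), (0,3)],
    [(1,3), (0,2), (0,4)],
    [(1,4), (0,3)]],
  ![[(0,0), (2,0), (1,1)],
    [(0,1), (2,1), (1,0), (1,2)],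
    [(0,2), (2,2), (1,1), (1,3)],
    [(0,3), (2,3), (1,2), (1,4)],
    [(0,4), (2,4), (1,3)]],
  ![[(1,0), (3,0), (2,1)],
    [(1,1), (3,1), (2,0), (2,2)],
    [(1,2), (3,2), (2,1), (2,3)],
    [(1,3), (3,3), (2,2), (2,4)],
    [(1,4), (3,4), (2,3)]],
  ![[(2,0), (4,0), (3,1)],
    [(2,1), (4,1), (3,0), (3,2)],
    [(2,2), (4,2), (3,1), (3,3)],
    [(2,3), (4,3), (3,2), (3,4)],
    [(2,4), (4,4), (3,3)]],
  ![[(3,0), (4,1)],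
    [(3,1), (4,0), (4,2)],
    [(3,2), (4,1), (4,3)],
    [(3,3), (4,2), (4,4)],
    [(3,4), (4,3)]]]

def nbrs : Fin 5 × Fin 5 → Finset (Fin 5 × Fin 5) := fun v => (nbrM v.1 v.2).toFinset

lemma lightsOut_apply {V : Type*} [Fintype V] (G : SimpleGraph V) [DecidableRel G.Adj]
    (c : V → ZMod 2) (u : V) :
    lightsOut G c u = c u + ∑ w ∈ G.neighborFinset u, c w := rfl

set_option maxHeartbeats 4000000 in
lemma nbr_eq : ∀ v : Fin 5 × Fin 5, (gridGraph 5).neighborFinset v = nbrs v := by decide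

set_option maxHeartbeats 4000000 in
lemma hk1 : lightsOut (gridGraph 5) k1f = 0 := by
  have h : ∀ u, k1f u + ∑ w ∈ nbrs u, k1f w = 0 := by decide
  funext u
  rw [lightsOut_apply, nbr_eq u]
  exact h u

set_option maxHeartbeats 4000000 in
lemma hk2 : lightsOut (gridGraph 5) k2f = 0 := by
  have h : ∀ u, k2f u + ∑ w ∈ nbrs u, k2f w = 0 := by decide
  funext u
  rw [lightsOut_apply, nbr_eq u]
  exact h u

set_option maxHeartbeats 0 in
lemma hcert : ∀ v, lightsOut (gridGraph 5) (certf v) = Tf v := by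
  have h : ∀ v u, certf v u + ∑ w ∈ nbrs u, certf v w = Tf v u := by decide
  intro v
  funext u
  rw [lightsOut_apply, nbr_eq u]
  exact h v u

lemma add3_cancel : ∀ A B C : ZMod 2, A + B + C = 0 → A = B + C := by decide

lemma ker_eq_s11 (x : Fin 5 × Fin 5 → ZMod 2) (hx : lightsOut (gridGraph 5) x = 0)
    (v : Fin 5 × Fin 5) : x v = k1f v * x pa + k2f v * x pb := by
  have h := lightsOut_symm (gridGraph 5) (certf v) x
  rw [hx, hcert v] at h
  simp only [Pi.zero_apply, mul_zero, Finset.sum_const_zero] at h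
  have h2 : x v + k1f v * x pa + k2f v * x pb = 0 := by
    rw [← h]
    simp only [Tf, add_mul, ite_mul, one_mul, zero_mul, Finset.sum_add_distrib,
      Finset.sum_ite_eq', Finset.mem_univ, if_true]
  exact add3_cancel _ _ _ h2

lemma zmod2_cases : ∀ z : ZMod 2, z = 0 ∨ z = 1 := by decide
lemma zmod2_addself : ∀ z : ZMod 2, z + z = 0 := by decide
lemma zmod2_flip : ∀ p q : ZMod 2, (p + q) + q = p := by decide

lemma cell_bound : ∀ a b c : ZMod 2,
    ((if a = 1 then 1 else 0) + (if a + b = 1 then 1 else 0) +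
     (if a + c = 1 then 1 else 0) + (if a + (b + c) = 1 then 1 else 0) : ℕ) ≤
    (if b = (0:ZMod 2) ∧ c = (0:ZMod 2) then 4 else 2) := by decide

set_option maxHeartbeats 1000000 in
lemma weight_ge : 15 ≤ hammingWeight x0f ∧ 15 ≤ hammingWeight (fun v => x0f v + k1f v) ∧
    15 ≤ hammingWeight (fun v => x0f v + k2f v) ∧
    15 ≤ hammingWeight (fun v => x0f v + (k1f v + k2f v)) := by
  refine ⟨by decide, by decide, by decide, by decide⟩

set_option maxHeartbeats 1000000 in
lemma bound_sum : (∑ _v ∈ (Finset.univ : Finset (Fin 5 × Fin 5)).filter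
    (fun v => k1f v = (0:ZMod 2) ∧ k2f v = (0:ZMod 2)), 4) +
    (∑ _v ∈ (Finset.univ : Finset (Fin 5 × Fin 5)).filter
    (fun v => ¬(k1f v = (0:ZMod 2) ∧ k2f v = (0:ZMod 2))), 2) = (60:ℕ) := by decide

set_option maxHeartbeats 1000000 in
lemma bound_sum' : ∑ v : Fin 5 × Fin 5,
    (if k1f v = (0:ZMod 2) ∧ k2f v = (0:ZMod 2) then (4:ℕ) else 2) = 60 := by decide

/-- The answer to the Most Clicks Problem on the 5 × 5 grid graph is 15. -/
theorem mcp_five :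
    (∀ b ∈ LinearMap.range (lightsOut (gridGraph 5)),
      ∃ x, lightsOut (gridGraph 5) x = b ∧ hammingWeight x ≤ 15) ∧
    (∃ b ∈ LinearMap.range (lightsOut (gridGraph 5)),
      ∀ x, lightsOut (gridGraph 5) x = b → 15 ≤ hammingWeight x) := by
  constructor
  · rintro b ⟨y, hy⟩
    have hmap : ∀ k, lightsOut (gridGraph 5) k = 0 → lightsOut (gridGraph 5) (y + k) = b := by
      intro k hk
      rw [map_add, hy, hk, add_zero]
    have h12 : lightsOut (gridGraph 5) (k1f + k2f) = 0 := by
      rw [map_add, hk1, hk2, add_zero]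
    have hsum : hammingWeight y + hammingWeight (y + k1f) + hammingWeight (y + k2f)
        + hammingWeight (y + (k1f + k2f)) ≤ 60 := by
      rw [hw_eq, hw_eq, hw_eq, hw_eq, ← Finset.sum_add_distrib, ← Finset.sum_add_distrib,
        ← Finset.sum_add_distrib]
      refine le_trans (Finset.sum_le_sum
        (g := fun v => if k1f v = (0:ZMod 2) ∧ k2f v = (0:ZMod 2) then (4:ℕ) else 2)
        (fun v _ => ?_)) (le_of_eq bound_sum')
      simp only [Pi.add_apply]
      exact cell_bound (y v) (k1f v) (k2f v)
    by_contra hcon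
    push_neg at hcon
    have w0 := hcon y hy
    have w1 := hcon (y + k1f) (hmap k1f hk1)
    have w2 := hcon (y + k2f) (hmap k2f hk2)
    have w3 := hcon (y + (k1f + k2f)) (hmap _ h12)
    omega
  · refine ⟨lightsOut (gridGraph 5) x0f, ⟨x0f, rfl⟩, fun x hx => ?_⟩
    have hdk : lightsOut (gridGraph 5) (x + x0f) = 0 := by
      rw [map_add, hx]
      funext v
      exact zmod2_addself _
    have hxv : ∀ v, x v = x0f v + (k1f v * (x + x0f) pa + k2f v * (x + x0f) pb) := by
      intro v
      have h1 := ker_eq_s11 (x + x0f) hdk v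
      have h2 : (x v + x0f v) + x0f v = x v := zmod2_flip _ _
      rw [Pi.add_apply] at h1
      rw [← h2, h1, add_comm]
    rcases zmod2_cases ((x + x0f) pa) with ha | ha <;>
      rcases zmod2_cases ((x + x0f) pb) with hb | hb
    · have hxe : x = x0f := by
        funext v; rw [hxv v, ha, hb]; ring
      rw [hxe]; exact weight_ge.1
    · have hxe : x = fun v => x0f v + k2f v := by
        funext v; rw [hxv v, ha, hb]; ring
      rw [hxe]; exact weight_ge.2.2.1
    · have hxe : x = fun v => x0f v + k1f v := by
        funext v; rw [hxv v, ha, hb]; ring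
      rw [hxe]; exact weight_ge.2.1
    · have hxe : x = fun v => x0f v + (k1f v + k2f v) := by
        funext v; rw [hxv v, ha, hb]; ring
      rw [hxe]; exact weight_ge.2.2.2
end
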